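/- Let X be a real m×n matrix whose columns are partitioned as X = [X₁, X₂, ..., X_k], where every column of X_i lies in a linear subspace S_i of ℝ^m and the subspaces S₁, ..., S_k are independent. Then the unique minimizer of ‖Z‖_* over all n×n matrices Z with X = XZ is block diagonal conforming to this partition: its (p,q) entry is zero whenever columns p and q of X belong to different blocks. -/

import Mathlib

open Matrix

/-- The nuclear norm of a real matrix: the sum of its singular values
(the square roots of the eigenvalues of `Aᵀ * A`). -/
noncomputable def nuclearNorm {m n : Type*} [Fintype m] [Fintype n] [DecidableEq n]
    (A : Matrix m n ℝ) : ℝ :=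
  ∑ i, Real.sqrt ((show (Aᵀ * A).IsHermitian by
    simpa [Matrix.conjTranspose_eq_transpose_of_trivial] using
      Matrix.isHermitian_conjTranspose_mul_self A).eigenvalues i)

variable {n : ℕ}

lemma diag_tmul_nonneg (B : Matrix (Fin n) (Fin n) ℝ) (i : Fin n) :
    0 ≤ (Bᵀ * B) i i := by
  rw [Matrix.mul_apply]
  exact Finset.sum_nonneg fun l _ => by simp [Matrix.transpose_apply, mul_self_nonneg]

lemma trace_tmul_eq_zero_iff (B : Matrix (Fin n) (Fin n) ℝ) :
    (Bᵀ * B).trace = 0 → B = 0 := by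
  intro h
  have h2 : ∑ i, ∑ l, (B l i)^2 = 0 := by
    rw [← h, Matrix.trace]
    simp [Matrix.diag, Matrix.mul_apply, sq]
  ext l q
  have := Finset.sum_eq_zero_iff_of_nonneg (fun i _ => Finset.sum_nonneg
    (fun l _ => sq_nonneg (B l i))) |>.mp h2 q (Finset.mem_univ q)
  have := Finset.sum_eq_zero_iff_of_nonneg (fun l _ => sq_nonneg (B l q)) |>.mp this l
    (Finset.mem_univ l)
  simpa [pow_eq_zero_iff] using this

lemma diag_conj_eigen {N : Matrix (Fin n) (Fin n) ℝ} (hN : N.IsHermitian) :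
    (hN.eigenvectorUnitary : Matrix (Fin n) (Fin n) ℝ)ᵀ * N *
      (hN.eigenvectorUnitary : Matrix (Fin n) (Fin n) ℝ) = diagonal hN.eigenvalues := by
  have := hN.conjStarAlgAut_star_eigenvectorUnitary
  rw [Unitary.conjStarAlgAut_apply] at this
  simpa [Matrix.star_eq_conjTranspose, Matrix.conjTranspose_eq_transpose_of_trivial,
    RCLike.ofReal_real_eq_id] using this

lemma UtU (N : Matrix (Fin n) (Fin n) ℝ) (hN : N.IsHermitian) :
    (hN.eigenvectorUnitary : Matrix (Fin n) (Fin n) ℝ)ᵀ *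
      (hN.eigenvectorUnitary : Matrix (Fin n) (Fin n) ℝ) = 1 := by
  have := Matrix.mem_unitaryGroup_iff'.mp (hN.eigenvectorUnitary).2
  rwa [Matrix.star_eq_conjTranspose, Matrix.conjTranspose_eq_transpose_of_trivial] at this

lemma UUt (N : Matrix (Fin n) (Fin n) ℝ) (hN : N.IsHermitian) :
    (hN.eigenvectorUnitary : Matrix (Fin n) (Fin n) ℝ) *
      (hN.eigenvectorUnitary : Matrix (Fin n) (Fin n) ℝ)ᵀ = 1 := by
  have := Matrix.mem_unitaryGroup_iff.mp (hN.eigenvectorUnitary).2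
  rwa [Matrix.star_eq_conjTranspose, Matrix.conjTranspose_eq_transpose_of_trivial] at this

lemma nuclearNorm_proj {P : Matrix (Fin n) (Fin n) ℝ} (hPt : Pᵀ = P) (hPP : P * P = P) :
    nuclearNorm P = P.trace := by
  have hM : (Pᵀ * P).IsHermitian := by
    simpa [Matrix.conjTranspose_eq_transpose_of_trivial] using Matrix.isHermitian_conjTranspose_mul_self P
  have hMP : Pᵀ * P = P := by rw [hPt, hPP]
  set U := (hM.eigenvectorUnitary : Matrix (Fin n) (Fin n) ℝ) with hUdef
  have hdiag : Uᵀ * (Pᵀ * P) * U = diagonal hM.eigenvalues := diag_conj_eigen hM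
  have key : U * (Uᵀ * ((Pᵀ * P) * U)) = (Pᵀ * P) * U := by
    rw [← mul_assoc, UUt _ hM, one_mul]
  have h2 : diagonal hM.eigenvalues * diagonal hM.eigenvalues = diagonal hM.eigenvalues := by
    rw [← hdiag]
    calc (Uᵀ * (Pᵀ * P) * U) * (Uᵀ * (Pᵀ * P) * U)
        = Uᵀ * ((Pᵀ * P) * (U * (Uᵀ * ((Pᵀ * P) * U)))) := by simp only [mul_assoc]
      _ = Uᵀ * ((Pᵀ * P) * ((Pᵀ * P) * U)) := by rw [key]
      _ = Uᵀ * (((Pᵀ * P) * (Pᵀ * P)) * U) := by simp only [mul_assoc]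
      _ = Uᵀ * (Pᵀ * P) * U := by rw [hMP, hPP, mul_assoc]
  have hsq : ∀ i, hM.eigenvalues i * hM.eigenvalues i = hM.eigenvalues i := by
    intro i
    have := congrArg (fun M : Matrix (Fin n) (Fin n) ℝ => M i i) h2
    simpa [Matrix.diagonal_mul_diagonal, Matrix.diagonal_apply_eq] using this
  have hsqrt : ∀ i, Real.sqrt (hM.eigenvalues i) = hM.eigenvalues i := by
    intro i
    have h := hsq i
    have h01 : hM.eigenvalues i = 0 ∨ hM.eigenvalues i = 1 := by
      rcases mul_eq_zero.mp (show hM.eigenvalues i * (hM.eigenvalues i - 1) = 0 by nlinarith) with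
        h' | h'
      exacts [Or.inl h', Or.inr (by linarith)]
    rcases h01 with h' | h' <;> rw [h'] <;> simp
  have htr : ∑ i, hM.eigenvalues i = P.trace := by
    have := congrArg Matrix.trace hdiag
    rw [Matrix.trace_mul_cycle, ← mul_assoc, UUt _ hM, one_mul] at this
    calc ∑ i, hM.eigenvalues i = (diagonal hM.eigenvalues).trace := (Matrix.trace_diagonal _).symm
      _ = (Pᵀ * P).trace := this.symm
      _ = P.trace := by rw [hMP]
  rw [nuclearNorm]
  calc ∑ i, Real.sqrt (hM.eigenvalues i) = ∑ i, hM.eigenvalues i := by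
        exact Finset.sum_congr rfl fun i _ => hsqrt i
    _ = P.trace := htr

lemma nuclearNorm_lower {P E : Matrix (Fin n) (Fin n) ℝ} (hPt : Pᵀ = P) (hPP : P * P = P)
    (hPE : P * E = 0) :
    P.trace ≤ nuclearNorm (P + E) ∧ (nuclearNorm (P + E) ≤ P.trace → E = 0) := by
  have hM : ((P + E)ᵀ * (P + E)).IsHermitian := by
    simpa [Matrix.conjTranspose_eq_transpose_of_trivial] using
      Matrix.isHermitian_conjTranspose_mul_self (P + E)
  have hPtE : Pᵀ * E = 0 := by rw [hPt, hPE]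
  have hEtP : Eᵀ * P = 0 := by
    have := congrArg Matrix.transpose hPtE
    rwa [Matrix.transpose_mul, Matrix.transpose_transpose, Matrix.transpose_zero] at this
  have hMeq : (P + E)ᵀ * (P + E) = P + Eᵀ * E := by
    rw [Matrix.transpose_add, Matrix.add_mul, Matrix.mul_add, Matrix.mul_add, hPtE, hEtP,
      hPt, hPP]
    abel
  set U := (hM.eigenvectorUnitary : Matrix (Fin n) (Fin n) ℝ) with hUdef
  have hdiag : Uᵀ * (P + Eᵀ * E) * U = diagonal hM.eigenvalues := by
    rw [← hMeq]; exact diag_conj_eigen hM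
  set p : Fin n → ℝ := fun i => (Uᵀ * P * U) i i with hpdef
  set f : Fin n → ℝ := fun i => (Uᵀ * (Eᵀ * E) * U) i i with hfdef
  have hlam : ∀ i, hM.eigenvalues i = p i + f i := by
    intro i
    have h : Uᵀ * P * U + Uᵀ * (Eᵀ * E) * U = diagonal hM.eigenvalues := by
      rw [← hdiag, Matrix.mul_add, Matrix.add_mul]
    have := congrArg (fun M : Matrix (Fin n) (Fin n) ℝ => M i i) h
    simpa [Matrix.add_apply, Matrix.diagonal_apply_eq, hpdef, hfdef] using this.symm
  have hp0 : ∀ i, 0 ≤ p i := by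
    intro i
    have h : Uᵀ * P * U = (P * U)ᵀ * (P * U) := by
      rw [Matrix.transpose_mul]
      calc Uᵀ * P * U = Uᵀ * (Pᵀ * P) * U := by rw [hPt, hPP]
        _ = Uᵀ * Pᵀ * (P * U) := by simp only [mul_assoc]
    rw [hpdef]; simp only [h]; exact diag_tmul_nonneg _ i
  have hf0 : ∀ i, 0 ≤ f i := by
    intro i
    have h : Uᵀ * (Eᵀ * E) * U = (E * U)ᵀ * (E * U) := by
      rw [Matrix.transpose_mul]; simp only [mul_assoc]
    rw [hfdef]; simp only [h]; exact diag_tmul_nonneg _ i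
  have hp1 : ∀ i, p i ≤ 1 := by
    intro i
    have hQt : (1 - P)ᵀ = 1 - P := by rw [Matrix.transpose_sub, Matrix.transpose_one, hPt]
    have hQQ : (1 - P) * (1 - P) = 1 - P := by
      rw [Matrix.sub_mul, Matrix.mul_sub, Matrix.mul_sub, hPP]; noncomm_ring
    have h : Uᵀ * (1 - P) * U = ((1 - P) * U)ᵀ * ((1 - P) * U) := by
      rw [Matrix.transpose_mul]
      calc Uᵀ * (1 - P) * U = Uᵀ * ((1 - P)ᵀ * (1 - P)) * U := by rw [hQt, hQQ]
        _ = Uᵀ * (1 - P)ᵀ * ((1 - P) * U) := by simp only [mul_assoc]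
    have hq0 : 0 ≤ (Uᵀ * (1 - P) * U) i i := by rw [h]; exact diag_tmul_nonneg _ i
    have hsum1 : (Uᵀ * P * U) i i + (Uᵀ * (1 - P) * U) i i = 1 := by
      have : Uᵀ * P * U + Uᵀ * (1 - P) * U = 1 := by
        rw [← Matrix.add_mul, ← Matrix.mul_add, add_sub_cancel, mul_one, UtU _ hM]
      have := congrArg (fun M : Matrix (Fin n) (Fin n) ℝ => M i i) this
      simpa [Matrix.add_apply, Matrix.one_apply_eq] using this
    rw [hpdef]; simp only; linarith
  have hptr : ∑ i, p i = P.trace := by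
    have : (Uᵀ * P * U).trace = P.trace := by
      rw [Matrix.trace_mul_cycle, UUt _ hM, one_mul]
    rw [← this, Matrix.trace]
    rfl
  have hkey : ∀ i, p i ≤ Real.sqrt (hM.eigenvalues i) := by
    intro i
    have h1 : Real.sqrt (p i) ≤ Real.sqrt (hM.eigenvalues i) :=
      Real.sqrt_le_sqrt (by rw [hlam i]; linarith [hf0 i])
    have h2 : p i ≤ Real.sqrt (p i) := by
      nlinarith [Real.sq_sqrt (hp0 i), Real.sqrt_nonneg (p i), hp1 i, hp0 i]
    linarith
  constructor
  · rw [← hptr, nuclearNorm]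
    exact Finset.sum_le_sum fun i _ => hkey i
  · intro hle
    rw [nuclearNorm, ← hptr] at hle
    have heq : ∀ i ∈ Finset.univ, Real.sqrt (hM.eigenvalues i) = p i := by
      intro i _
      by_contra hne
      have hlt : p i < Real.sqrt (hM.eigenvalues i) := lt_of_le_of_ne (hkey i) (Ne.symm hne)
      have : ∑ j, p j < ∑ j, Real.sqrt (hM.eigenvalues j) :=
        Finset.sum_lt_sum (fun j _ => hkey j) ⟨i, Finset.mem_univ i, hlt⟩
      linarith
    have hfz : ∀ i, f i = 0 := by
      intro i
      have h1 : hM.eigenvalues i = p i * p i := by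
        have := heq i (Finset.mem_univ i)
        have h0 : 0 ≤ hM.eigenvalues i := by rw [hlam i]; linarith [hp0 i, hf0 i]
        rw [← this, Real.mul_self_sqrt h0]
      have := hlam i
      nlinarith [hp0 i, hp1 i, hf0 i]
    have htrE : (Eᵀ * E).trace = 0 := by
      have h : (Uᵀ * (Eᵀ * E) * U).trace = (Eᵀ * E).trace := by
        rw [Matrix.trace_mul_cycle, UUt _ hM, one_mul]
      rw [← h, Matrix.trace]
      exact Finset.sum_eq_zero fun i _ => hfz i
    exact trace_tmul_eq_zero_iff E htrE


variable {m n : ℕ} (X : Matrix (Fin m) (Fin n) ℝ)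

section Proj
variable (K : Submodule ℝ (EuclideanSpace ℝ (Fin n)))

noncomputable def projLM : (Fin n → ℝ) →ₗ[ℝ] (Fin n → ℝ) :=
  (WithLp.linearEquiv 2 ℝ (Fin n → ℝ)).toLinearMap ∘ₗ
    (Kᗮ.subtype ∘ₗ (Submodule.orthogonalProjectionOnto Kᗮ).toLinearMap) ∘ₗ
      (WithLp.linearEquiv 2 ℝ (Fin n → ℝ)).symm.toLinearMap

noncomputable def projMat : Matrix (Fin n) (Fin n) ℝ := LinearMap.toMatrix' (projLM K)

lemma projMat_mulVec (v : Fin n → ℝ) :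
    (projMat K) *ᵥ v = ((Submodule.orthogonalProjectionOnto Kᗮ)
      ((WithLp.equiv 2 (Fin n → ℝ)).symm v) : EuclideanSpace ℝ (Fin n)) := by
  rw [← Matrix.toLin'_apply, projMat, Matrix.toLin'_toMatrix']
  rfl
end Proj

section ProjFacts
variable (K : Submodule ℝ (EuclideanSpace ℝ (Fin n)))
lemma inner_eq_sum (x y : EuclideanSpace ℝ (Fin n)) :
    (inner ℝ x y : ℝ) = ∑ i, x i * y i := by
  simp [PiLp.inner_apply, RCLike.inner_apply, conj_trivial]
  exact Finset.sum_congr rfl fun i _ => mul_comm _ _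

lemma proj_adj (u v : EuclideanSpace ℝ (Fin n)) :
    (inner ℝ (((Submodule.orthogonalProjectionOnto Kᗮ) u : Kᗮ) : EuclideanSpace ℝ (Fin n)) v : ℝ)
      = inner ℝ u (((Submodule.orthogonalProjectionOnto Kᗮ) v : Kᗮ) : EuclideanSpace ℝ (Fin n)) :=
  Submodule.inner_starProjection_left_eq_right (K := Kᗮ) u v

lemma proj_fix {v : EuclideanSpace ℝ (Fin n)} (hv : v ∈ Kᗮ) :
    (((Submodule.orthogonalProjectionOnto Kᗮ) v : Kᗮ) : EuclideanSpace ℝ (Fin n)) = v :=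
  Submodule.starProjection_eq_self_iff.mpr hv

lemma proj_zero' {v : EuclideanSpace ℝ (Fin n)} (hv : v ∈ K) :
    (((Submodule.orthogonalProjectionOnto Kᗮ) v : Kᗮ) : EuclideanSpace ℝ (Fin n)) = 0 := by
  rw [Submodule.orthogonalProjectionOnto_apply_of_mem_orthogonal
    (Submodule.le_orthogonal_orthogonal K hv)]
  simp

lemma proj_sub_mem (v : EuclideanSpace ℝ (Fin n)) :
    v - (((Submodule.orthogonalProjectionOnto Kᗮ) v : Kᗮ) : EuclideanSpace ℝ (Fin n)) ∈ K := by
  have := Submodule.sub_starProjection_mem_orthogonal (K := Kᗮ) v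
  rwa [Submodule.orthogonal_orthogonal] at this

lemma projMat_apply (p q : Fin n) :
    projMat K p q = (((Submodule.orthogonalProjectionOnto Kᗮ) (EuclideanSpace.single q (1:ℝ)) : Kᗮ)
      : EuclideanSpace ℝ (Fin n)) p := by
  have := congrFun (projMat_mulVec K (Pi.single q 1)) p
  simpa [Matrix.mulVec_single, WithLp.equiv_symm_apply, PiLp.toLp_single] using this

lemma projMat_symm : (projMat K)ᵀ = projMat K := by
  ext p q
  rw [Matrix.transpose_apply, projMat_apply, projMat_apply]
  have h1 : ((((Submodule.orthogonalProjectionOnto Kᗮ) (EuclideanSpace.single p (1:ℝ)) : Kᗮ) : EuclideanSpace ℝ (Fin n))) q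
      = (inner ℝ ((((Submodule.orthogonalProjectionOnto Kᗮ) (EuclideanSpace.single p (1:ℝ)) : Kᗮ) : EuclideanSpace ℝ (Fin n))) (EuclideanSpace.single q (1:ℝ)) : ℝ) := by
    rw [inner_eq_sum]
    rw [Finset.sum_eq_single q]
    · simp [EuclideanSpace.single_apply]
    · intro b _ hb; simp [EuclideanSpace.single_apply, hb]
    · simp
  have h2 : ((((Submodule.orthogonalProjectionOnto Kᗮ) (EuclideanSpace.single q (1:ℝ)) : Kᗮ) : EuclideanSpace ℝ (Fin n))) p
      = (inner ℝ (EuclideanSpace.single p (1:ℝ)) ((((Submodule.orthogonalProjectionOnto Kᗮ) (EuclideanSpace.single q (1:ℝ)) : Kᗮ) : EuclideanSpace ℝ (Fin n))) : ℝ) := by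
    rw [inner_eq_sum]
    rw [Finset.sum_eq_single p]
    · simp [EuclideanSpace.single_apply]
    · intro b _ hb; simp [EuclideanSpace.single_apply, hb]
    · simp
  rw [h1, h2, proj_adj]

lemma projMat_idem : projMat K * projMat K = projMat K := by
  ext p q
  rw [Matrix.mul_apply, projMat_apply]
  have hcolP : ∀ l, projMat K l q = ((((Submodule.orthogonalProjectionOnto Kᗮ) (EuclideanSpace.single q (1:ℝ)) : Kᗮ) : EuclideanSpace ℝ (Fin n))) l :=
    fun l => projMat_apply K l q
  calc ∑ l, projMat K p l * projMat K l q
      = ∑ l, projMat K p l * ((((Submodule.orthogonalProjectionOnto Kᗮ) (EuclideanSpace.single q (1:ℝ)) : Kᗮ) : EuclideanSpace ℝ (Fin n))) l := by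
        simp_rw [hcolP]
    _ = (projMat K *ᵥ (WithLp.equiv 2 (Fin n → ℝ) ((((Submodule.orthogonalProjectionOnto Kᗮ) (EuclideanSpace.single q (1:ℝ)) : Kᗮ) : EuclideanSpace ℝ (Fin n))))) p := by
        rw [Matrix.mulVec]
        rfl
    _ = ((((Submodule.orthogonalProjectionOnto Kᗮ) ((((Submodule.orthogonalProjectionOnto Kᗮ) (EuclideanSpace.single q (1:ℝ)) : Kᗮ) : EuclideanSpace ℝ (Fin n))) : Kᗮ) : EuclideanSpace ℝ (Fin n))) p := by
        rw [projMat_mulVec]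
        rfl
    _ = ((((Submodule.orthogonalProjectionOnto Kᗮ) (EuclideanSpace.single q (1:ℝ)) : Kᗮ) : EuclideanSpace ℝ (Fin n))) p := by
        rw [proj_fix K (SetLike.coe_mem _)]

lemma mem_kerK (v : EuclideanSpace ℝ (Fin n)) :
    v ∈ LinearMap.ker (Matrix.toEuclideanLin X) ↔ X *ᵥ (WithLp.equiv 2 (Fin n → ℝ) v) = 0 := by
  rw [LinearMap.mem_ker, Matrix.toEuclideanLin_apply]
  constructor
  · intro h
    have := congrArg (WithLp.equiv 2 (Fin m → ℝ)) h
    simpa using this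
  · intro h
    rw [show X *ᵥ v.ofLp = 0 from h]
    simp

lemma row_mem_orth (i : Fin m) :
    (WithLp.equiv 2 (Fin n → ℝ)).symm (X i) ∈ (LinearMap.ker (Matrix.toEuclideanLin X))ᗮ := by
  rw [Submodule.mem_orthogonal]
  intro u hu
  rw [inner_eq_sum]
  have h := (mem_kerK X u).mp hu
  have := congrFun h i
  rw [Matrix.mulVec, dotProduct] at this
  simp only [Pi.zero_apply] at this
  rw [← this]
  apply Finset.sum_congr rfl
  intro p _
  rw [mul_comm]
  rfl

lemma X_mul_projMat : X * projMat (LinearMap.ker (Matrix.toEuclideanLin X)) = X := by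
  set K := LinearMap.ker (Matrix.toEuclideanLin X) with hK
  ext i q
  rw [Matrix.mul_apply]
  calc ∑ l, X i l * projMat K l q
      = ∑ l, X i l * (((Submodule.orthogonalProjectionOnto Kᗮ) (EuclideanSpace.single q (1:ℝ)) : Kᗮ)
          : EuclideanSpace ℝ (Fin n)) l := by
        simp_rw [projMat_apply]
    _ = (inner ℝ ((WithLp.equiv 2 (Fin n → ℝ)).symm (X i))
          (((Submodule.orthogonalProjectionOnto Kᗮ) (EuclideanSpace.single q (1:ℝ)) : Kᗮ)
          : EuclideanSpace ℝ (Fin n)) : ℝ) := by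
        rw [inner_eq_sum]
        rfl
    _ = (inner ℝ (((Submodule.orthogonalProjectionOnto Kᗮ) ((WithLp.equiv 2 (Fin n → ℝ)).symm (X i)) : Kᗮ)
          : EuclideanSpace ℝ (Fin n)) (EuclideanSpace.single q (1:ℝ)) : ℝ) := by
        rw [proj_adj]
    _ = (inner ℝ ((WithLp.equiv 2 (Fin n → ℝ)).symm (X i))
          (EuclideanSpace.single q (1:ℝ)) : ℝ) := by
        rw [proj_fix K (row_mem_orth X i)]
    _ = X i q := by
        rw [EuclideanSpace.inner_single_right]
        simp

lemma projMat_entry_symm (K : Submodule ℝ (EuclideanSpace ℝ (Fin n))) (a b : Fin n) :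
    projMat K a b = projMat K b a := by
  conv_lhs => rw [← projMat_symm K]
  rfl

lemma projMat_mul_feasible (W : Matrix (Fin n) (Fin n) ℝ) (hW : X = X * W) :
    projMat (LinearMap.ker (Matrix.toEuclideanLin X)) * W
      = projMat (LinearMap.ker (Matrix.toEuclideanLin X)) := by
  set K := LinearMap.ker (Matrix.toEuclideanLin X) with hK
  have hcolK : ∀ q : Fin n, (WithLp.equiv 2 (Fin n → ℝ)).symm
      ((fun l => W l q) - Pi.single q 1) ∈ K := by
    intro q
    rw [mem_kerK]
    have h1 : X *ᵥ ((fun l => W l q) - Pi.single q 1)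
        = X *ᵥ (fun l => W l q) - X *ᵥ (Pi.single q 1) := Matrix.mulVec_sub X _ _
    have h2 : X *ᵥ (fun l => W l q) = fun i => (X * W) i q := by
      funext i
      rw [Matrix.mulVec, dotProduct, Matrix.mul_apply]
    have h3 : X *ᵥ (Pi.single q 1) = fun i => X i q := by
      funext i
      rw [Matrix.mulVec_single]
      simp
    have : X *ᵥ ((fun l => W l q) - Pi.single q 1) = 0 := by
      rw [h1, h2, h3, ← hW]
      funext i
      simp
    simpa using this
  have hproj : ∀ q : Fin n,
      (((Submodule.orthogonalProjectionOnto Kᗮ) ((WithLp.equiv 2 (Fin n → ℝ)).symm (fun l => W l q)) : Kᗮ)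
        : EuclideanSpace ℝ (Fin n))
      = (((Submodule.orthogonalProjectionOnto Kᗮ) (EuclideanSpace.single q (1:ℝ)) : Kᗮ)
        : EuclideanSpace ℝ (Fin n)) := by
    intro q
    have h0 := proj_zero' K (hcolK q)
    have hsub : (WithLp.equiv 2 (Fin n → ℝ)).symm ((fun l => W l q) - Pi.single q 1)
        = (WithLp.equiv 2 (Fin n → ℝ)).symm (fun l => W l q) - EuclideanSpace.single q (1:ℝ) := by
      rfl
    rw [hsub, map_sub] at h0
    have h1 : (((Submodule.orthogonalProjectionOnto Kᗮ) ((WithLp.equiv 2 (Fin n → ℝ)).symm (fun l => W l q))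
          : Kᗮ) : EuclideanSpace ℝ (Fin n))
        - (((Submodule.orthogonalProjectionOnto Kᗮ) (EuclideanSpace.single q (1:ℝ)) : Kᗮ)
          : EuclideanSpace ℝ (Fin n)) = 0 := by exact_mod_cast h0
    exact sub_eq_zero.mp h1
  ext p q
  rw [Matrix.mul_apply]
  calc ∑ l, projMat K p l * W l q
      = ∑ l, (((Submodule.orthogonalProjectionOnto Kᗮ) (EuclideanSpace.single p (1:ℝ)) : Kᗮ)
          : EuclideanSpace ℝ (Fin n)) l * W l q := by
        refine Finset.sum_congr rfl fun l _ => ?_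
        rw [projMat_entry_symm, projMat_apply]
    _ = (inner ℝ (((Submodule.orthogonalProjectionOnto Kᗮ) (EuclideanSpace.single p (1:ℝ)) : Kᗮ)
          : EuclideanSpace ℝ (Fin n))
          ((WithLp.equiv 2 (Fin n → ℝ)).symm (fun l => W l q)) : ℝ) := by
        rw [inner_eq_sum]
        rfl
    _ = (inner ℝ (EuclideanSpace.single p (1:ℝ))
          (((Submodule.orthogonalProjectionOnto Kᗮ) ((WithLp.equiv 2 (Fin n → ℝ)).symm (fun l => W l q)) : Kᗮ)
          : EuclideanSpace ℝ (Fin n)) : ℝ) := proj_adj K _ _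
    _ = (inner ℝ (EuclideanSpace.single p (1:ℝ))
          (((Submodule.orthogonalProjectionOnto Kᗮ) (EuclideanSpace.single q (1:ℝ)) : Kᗮ)
          : EuclideanSpace ℝ (Fin n)) : ℝ) := by rw [hproj q]
    _ = projMat K p q := by
        rw [EuclideanSpace.inner_single_left, projMat_apply]
        simp

lemma indep_comp_zero {V : Type*} [AddCommGroup V] [Module ℝ V] {k : ℕ}
    {S : Fin k → Submodule ℝ V} (hind : iSupIndep S) {g : Fin k → V}
    (hg : ∀ i, g i ∈ S i) (hsum : ∑ i, g i = 0) (i : Fin k) : g i = 0 := by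
  have hrest : ∑ j ∈ Finset.univ.erase i, g j ∈ ⨆ j, ⨆ (_ : j ≠ i), S j :=
    Submodule.sum_mem _ fun j hj =>
      Submodule.mem_iSup_of_mem j
        (Submodule.mem_iSup_of_mem (Finset.ne_of_mem_erase hj) (hg j))
  have heq : g i = -∑ j ∈ Finset.univ.erase i, g j := by
    have h := Finset.add_sum_erase Finset.univ g (Finset.mem_univ i)
    rw [hsum] at h
    exact eq_neg_of_add_eq_zero_left h
  exact Submodule.disjoint_def.mp (hind i) (g i) (hg i) (heq ▸ neg_mem hrest)

section Mask
variable {k : ℕ} (S : Fin k → Submodule ℝ (Fin m → ℝ)) (c : Fin n → Fin k)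

lemma mask_mem_ker (hcol : ∀ j, (fun i => X i j) ∈ S (c j)) (hind : iSupIndep S)
    {u : EuclideanSpace ℝ (Fin n)} (hu : u ∈ LinearMap.ker (Matrix.toEuclideanLin X)) (b : Fin k) :
    (WithLp.equiv 2 (Fin n → ℝ)).symm (fun p => if c p = b then u p else 0)
      ∈ LinearMap.ker (Matrix.toEuclideanLin X) := by
  rw [mem_kerK]
  set g : Fin k → (Fin m → ℝ) :=
    fun b' => ∑ p, (if c p = b' then u p else 0) • (fun i => X i p) with hgdef
  have hg : ∀ b', g b' ∈ S b' := fun b' => Submodule.sum_mem _ (fun p _ => by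
    by_cases h : c p = b'
    · rw [if_pos h]
      exact h ▸ Submodule.smul_mem _ _ (hcol p)
    · rw [if_neg h, zero_smul]
      exact Submodule.zero_mem _)
  have hXu : X *ᵥ (WithLp.equiv 2 (Fin n → ℝ) u) = 0 := (mem_kerK X u).mp hu
  have hsum : ∑ b', g b' = 0 := by
    funext i
    rw [Finset.sum_apply]
    have h1 : ∀ b', g b' i = ∑ p, (if c p = b' then u p * X i p else 0) := by
      intro b'
      rw [hgdef]
      simp only [Finset.sum_apply, Pi.smul_apply, smul_eq_mul, ite_mul, zero_mul]
    simp_rw [h1]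
    rw [Finset.sum_comm]
    have h2 : ∀ p, ∑ b', (if c p = b' then u p * X i p else 0) = u p * X i p := by
      intro p
      rw [Finset.sum_ite_eq]
      simp
    simp_rw [h2]
    have hthis := congrFun hXu i
    rw [Matrix.mulVec, dotProduct] at hthis
    simp only [Pi.zero_apply] at hthis
    show ∑ x : Fin n, u x * X i x = (0 : Fin m → ℝ) i
    rw [Pi.zero_apply, ← hthis]
    apply Finset.sum_congr rfl
    intro p _
    rw [mul_comm]
    rfl
  have hgb := indep_comp_zero hind hg hsum b
  have : X *ᵥ (fun p => if c p = b then u p else 0) = g b := by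
    funext i
    rw [Matrix.mulVec, dotProduct, hgdef]
    simp only [Finset.sum_apply, Pi.smul_apply, smul_eq_mul, ite_mul, zero_mul]
    apply Finset.sum_congr rfl
    intro p _
    by_cases h : c p = b
    · rw [if_pos h, if_pos h, mul_comm]
    · rw [if_neg h, if_neg h, mul_zero]
  rw [Equiv.apply_symm_apply, this]
  exact hgb

lemma mask_mem_orth (hcol : ∀ j, (fun i => X i j) ∈ S (c j)) (hind : iSupIndep S)
    {v : EuclideanSpace ℝ (Fin n)}
    (hv : v ∈ (LinearMap.ker (Matrix.toEuclideanLin X))ᗮ) (b : Fin k) :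
    (WithLp.equiv 2 (Fin n → ℝ)).symm (fun p => if c p = b then v p else 0)
      ∈ (LinearMap.ker (Matrix.toEuclideanLin X))ᗮ := by
  rw [Submodule.mem_orthogonal]
  intro u hu
  rw [inner_eq_sum]
  have hmu := mask_mem_ker X S c hcol hind hu b
  have h0 : (inner ℝ ((WithLp.equiv 2 (Fin n → ℝ)).symm (fun p => if c p = b then u p else 0))
      v : ℝ) = 0 := (Submodule.mem_orthogonal _ v).mp hv _ hmu
  rw [inner_eq_sum] at h0
  calc ∑ p, u p * ((WithLp.equiv 2 (Fin n → ℝ)).symm (fun p => if c p = b then v p else 0)) p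
      = ∑ p, ((WithLp.equiv 2 (Fin n → ℝ)).symm (fun p => if c p = b then u p else 0)) p * v p := by
        apply Finset.sum_congr rfl
        intro p _
        show u p * (if c p = b then v p else 0) = (if c p = b then u p else 0) * v p
        by_cases h : c p = b
        · rw [if_pos h, if_pos h]
        · rw [if_neg h, if_neg h, mul_zero, zero_mul]
    _ = 0 := h0
end Mask

lemma projMat_block {k : ℕ} (S : Fin k → Submodule ℝ (Fin m → ℝ)) (c : Fin n → Fin k)
    (hcol : ∀ j, (fun i => X i j) ∈ S (c j)) (hind : iSupIndep S)
    (p q : Fin n) (hne : c p ≠ c q) :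
    projMat (LinearMap.ker (Matrix.toEuclideanLin X)) p q = 0 := by
  set K := LinearMap.ker (Matrix.toEuclideanLin X) with hK
  set b := c q with hb
  set w : EuclideanSpace ℝ (Fin n) :=
    (((Submodule.orthogonalProjectionOnto Kᗮ) (EuclideanSpace.single q (1:ℝ)) : Kᗮ)
      : EuclideanSpace ℝ (Fin n)) with hw
  set d : EuclideanSpace ℝ (Fin n) := EuclideanSpace.single q (1:ℝ) - w with hd
  have hdK : d ∈ K := proj_sub_mem K _
  have hwO : w ∈ Kᗮ := SetLike.coe_mem _
  set mw : EuclideanSpace ℝ (Fin n) :=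
    (WithLp.equiv 2 (Fin n → ℝ)).symm (fun r => if c r = b then w r else 0) with hmw
  set md : EuclideanSpace ℝ (Fin n) :=
    (WithLp.equiv 2 (Fin n → ℝ)).symm (fun r => if c r = b then d r else 0) with hmd
  have hmwO : mw ∈ Kᗮ := mask_mem_orth X S c hcol hind hwO b
  have hmdK : md ∈ K := mask_mem_ker X S c hcol hind hdK b
  have hkey : w - mw = md - d := by
    ext r
    show w r - (if c r = b then w r else 0) = (if c r = b then d r else 0) - d r
    by_cases h : c r = b
    · rw [if_pos h, if_pos h, sub_self, sub_self]
    · rw [if_neg h, if_neg h, zero_sub]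
      have hrq : r ≠ q := fun hrq => h (by rw [hrq, hb])
      have hdr : d r = -(w r) := by
        show EuclideanSpace.single q (1:ℝ) r - w r = -(w r)
        rw [EuclideanSpace.single_apply, if_neg hrq, zero_sub]
      rw [hdr, neg_neg, sub_zero]
  have hmem : w - mw ∈ K := by
    rw [hkey]
    exact Submodule.sub_mem K hmdK hdK
  have hmemO : w - mw ∈ Kᗮ := Submodule.sub_mem Kᗮ hwO hmwO
  have hzero : w = mw :=
    sub_eq_zero.mp (Submodule.disjoint_def.mp (Submodule.orthogonal_disjoint K) _ hmem hmemO)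
  rw [projMat_apply, ← hw, hzero]
  show (if c p = b then w p else 0) = 0
  rw [if_neg hne]


/-- If the columns of `X` are partitioned into blocks (block label `c j` for column `j`),
each column of the `i`-th block lies in a linear subspace `S i` of `ℝ^m`, and the
subspaces are independent, then the minimizer of the nuclear norm over all `Z` with
`X = X * Z` exists, is unique, and is block diagonal conforming to the partition:
its `(p, q)` entry vanishes whenever columns `p` and `q` lie in different blocks. -/
theorem nuclearNorm_minimizer_block_diagonal {m n k : ℕ} (X : Matrix (Fin m) (Fin n) ℝ)
    (S : Fin k → Submodule ℝ (Fin m → ℝ)) (c : Fin n → Fin k)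
    (hcol : ∀ j : Fin n, (fun i => X i j) ∈ S (c j))
    (hind : iSupIndep S) :
    ∃ Z : Matrix (Fin n) (Fin n) ℝ,
      (X = X * Z ∧
        ∀ W : Matrix (Fin n) (Fin n) ℝ, X = X * W → nuclearNorm Z ≤ nuclearNorm W) ∧
      (∀ Z' : Matrix (Fin n) (Fin n) ℝ,
        (X = X * Z' ∧
          ∀ W : Matrix (Fin n) (Fin n) ℝ, X = X * W → nuclearNorm Z' ≤ nuclearNorm W) →
        Z' = Z) ∧
      (∀ p q : Fin n, c p ≠ c q → Z p q = 0) := by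
  classical
  set K := LinearMap.ker (Matrix.toEuclideanLin X) with hK
  set P := projMat K with hP
  have hPt : Pᵀ = P := projMat_symm K
  have hPP : P * P = P := projMat_idem K
  have hXP : X * P = X := X_mul_projMat X
  have hnucP : nuclearNorm P = P.trace := nuclearNorm_proj hPt hPP
  have hmin : ∀ W : Matrix (Fin n) (Fin n) ℝ, X = X * W →
      P.trace ≤ nuclearNorm W ∧ (nuclearNorm W ≤ P.trace → W = P) := by
    intro W hW
    have hPW : P * W = P := projMat_mul_feasible X W hW
    have hPE : P * (W - P) = 0 := by rw [Matrix.mul_sub, hPW, hPP, sub_self]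
    have hWPE : W = P + (W - P) := by abel
    have h := nuclearNorm_lower hPt hPP hPE
    rw [← hWPE] at h
    exact ⟨h.1, fun hle => sub_eq_zero.mp (h.2 hle)⟩
  refine ⟨P, ⟨hXP.symm, ?_⟩, ?_, ?_⟩
  · intro W hW
    rw [hnucP]
    exact (hmin W hW).1
  · rintro Z' ⟨hfeas, hminZ'⟩
    have h1 : nuclearNorm Z' ≤ nuclearNorm P := hminZ' P hXP.symm
    rw [hnucP] at h1
    exact (hmin Z' hfeas).2 h1
  · intro p q hpq
    exact projMat_block X S c hcol hind p q hpq
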